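/- Let X and K be finite nonempty types, let π : K → ℝ be a prior with π_y > 0 for all y and Σ_{y∈K} π_y = 1, and let μ : K → X → ℝ be class-conditional probability mass functions with μ_y x > 0 for all y, x and Σ_{x∈X} μ_y x = 1. Define softmax(z)_y = exp(z_y) / Σ_{k∈K} exp(z_k), and define the balanced error of a classifier c : X → K as E_bal(c) = (1/|K|) Σ_{y∈K} Σ_{x∈X, c(x) ≠ y} μ_y x. Suppose f : X → K → ℝ satisfies, for every x ∈ X and y ∈ K, softmax(f(x) + log π)_y = π_y μ_y x / Σ_{k∈K} π_k μ_k x, and suppose c⋆ : X → K satisfies f(x)_{c⋆(x)} ≥ f(x)_y for every x ∈ X and y ∈ K. Then E_bal(c⋆) ≤ E_bal(c) for every classifier c : X → K. -/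

import Mathlib

open Finset

/-- The softmax function on a finite type. -/
noncomputable def softmax {K : Type*} [Fintype K] (z : K → ℝ) : K → ℝ :=
  fun y => Real.exp (z y) / ∑ k, Real.exp (z k)

/-- Lemma 1 of the paper (discrete setting): the argmax classifier of a scorer
`f` whose prior-adjusted softmax recovers the posterior
`π_y μ_y(x)/Σ_k π_k μ_k(x)` minimizes the balanced error, i.e., the average of
the per-class error rates. -/
theorem balanced_risk_minimizer_minimizes_balanced_error
    {X K : Type*} [Fintype X] [Fintype K] [Nonempty X] [Nonempty K]
    [DecidableEq K]
    (π : K → ℝ) (hπ0 : ∀ y, 0 < π y) (hπ1 : ∑ y, π y = 1)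
    (μ : K → X → ℝ)
    (hμ0 : ∀ y x, 0 < μ y x) (hμ1 : ∀ y, ∑ x, μ y x = 1)
    (f : X → K → ℝ)
    (hf : ∀ x y, softmax (fun k => f x k + Real.log (π k)) y =
      π y * μ y x / ∑ k, π k * μ k x)
    (cstar : X → K)
    (hstar : ∀ x y, f x y ≤ f x (cstar x)) :
    ∀ c : X → K,
      (1 / (Fintype.card K : ℝ)) *
          ∑ y, ∑ x ∈ Finset.univ.filter (fun x => cstar x ≠ y), μ y x ≤
        (1 / (Fintype.card K : ℝ)) *
          ∑ y, ∑ x ∈ Finset.univ.filter (fun x => c x ≠ y), μ y x := by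
  -- Step 1: μ (cstar x) x is maximal over classes.
  have key : ∀ x y, μ y x ≤ μ (cstar x) x := by
    intro x y
    set S : ℝ := ∑ k, Real.exp (f x k + Real.log (π k)) with hS
    set T : ℝ := ∑ k, π k * μ k x with hT
    have hSpos : 0 < S := Finset.sum_pos (fun k _ => Real.exp_pos _) ⟨Classical.arbitrary K, Finset.mem_univ _⟩
    have hTpos : 0 < T := Finset.sum_pos (fun k _ => mul_pos (hπ0 k) (hμ0 k x)) ⟨Classical.arbitrary K, Finset.mem_univ _⟩
    have hexp : ∀ z : K, Real.exp (f x z) = μ z x * (S / T) := by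
      intro z
      have h := hf x z
      simp only [softmax] at h
      have h1 : Real.exp (f x z + Real.log (π z)) = Real.exp (f x z) * π z := by
        rw [Real.exp_add, Real.exp_log (hπ0 z)]
      rw [h1] at h
      have h2 : Real.exp (f x z) * π z = (π z * μ z x / T) * S := by
        rw [← h]; field_simp; rfl
      have hπne := (hπ0 z).ne'
      rw [div_mul_eq_mul_div, eq_div_iff hTpos.ne'] at h2
      have h5 : π z * (Real.exp (f x z) * T) = π z * (μ z x * S) := by linear_combination h2
      have h6 := mul_left_cancel₀ hπne h5
      rw [eq_comm, ← mul_div_assoc, div_eq_iff hTpos.ne']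
      linear_combination -h6
    have h3 := hstar x y
    have h4 : Real.exp (f x y) ≤ Real.exp (f x (cstar x)) := Real.exp_le_exp.mpr h3
    rw [hexp y, hexp (cstar x)] at h4
    have hq : 0 < S / T := div_pos hSpos hTpos
    exact le_of_mul_le_mul_right h4 hq
  intro c
  -- Step 2: rewrite balanced error as sum over x.
  have rewr : ∀ g : X → K,
      ∑ y, ∑ x ∈ Finset.univ.filter (fun x => g x ≠ y), μ y x
        = ∑ x, ((∑ y, μ y x) - μ (g x) x) := by
    intro g
    have : ∀ y, ∑ x ∈ Finset.univ.filter (fun x => g x ≠ y), μ y x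
        = ∑ x, (if g x ≠ y then μ y x else 0) := fun y => (Finset.sum_filter _ _)
    simp only [this]
    rw [Finset.sum_comm]
    refine Finset.sum_congr rfl (fun x _ => ?_)
    have : ∀ y, (if g x ≠ y then μ y x else 0) = μ y x - (if y = g x then μ y x else 0) := by
      intro y
      rcases eq_or_ne (g x) y with h | h
      · simp [h]
      · simp [h, h.symm]
    simp only [this]
    rw [Finset.sum_sub_distrib, Finset.sum_ite_eq' Finset.univ (g x) (fun y => μ y x)]
    simp
  rw [rewr cstar, rewr c]
  have hcard : (0:ℝ) ≤ 1 / (Fintype.card K : ℝ) := by positivity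
  apply mul_le_mul_of_nonneg_left _ hcard
  exact Finset.sum_le_sum fun x _ => by linarith [key x (c x)]
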